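/- The map P ↦ P^c from non-crossing partitions of [n] to non-crossing partitions of [n] (Kreweras complement) is an order-reversing bijection: P ≤ Q implies Q^c ≤ P^c. -/
import Mathlib


/-- No two distinct blocks of `R` cross. -/
def NonCrossing (m : ℕ) (R : Finset (Finset (Fin m))) : Prop :=
  ∀ B ∈ R, ∀ B' ∈ R, B ≠ B' →
    ∀ i ∈ B, ∀ j ∈ B, ∀ k ∈ B', ∀ l ∈ B', ¬(i < k ∧ k < j ∧ j < l)

/-- `R` is a non-crossing partition of `Fin m`. -/
def IsNCPartition (m : ℕ) (R : Finset (Finset (Fin m))) : Prop :=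
  (∀ B ∈ R, B.Nonempty) ∧
  (∀ B ∈ R, ∀ B' ∈ R, B ≠ B' → Disjoint B B') ∧
  (∀ i : Fin m, ∃ B ∈ R, i ∈ B) ∧
  NonCrossing m R

/-- Refinement order. -/
def refines (m : ℕ) (P Q : Finset (Finset (Fin m))) : Prop :=
  ∀ B ∈ P, ∃ B' ∈ Q, B ⊆ B'

/-- The unprimed element `i` sits at position `2*i` in the interleaved order
`1 < 1' < 2 < 2' < ... < n < n'`. -/
def evenEmb (n : ℕ) (i : Fin n) : Fin (2 * n) := ⟨2 * i.val, by have := i.isLt; omega⟩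

/-- The primed element `i'` sits at position `2*i + 1` in the interleaved order. -/
def oddEmb (n : ℕ) (i : Fin n) : Fin (2 * n) := ⟨2 * i.val + 1, by have := i.isLt; omega⟩

/-- The union of `P` placed on the unprimed positions and `Q` placed on the primed
positions of the interleaved set of `2n` elements. -/
def interleave (n : ℕ) (P Q : Finset (Finset (Fin n))) : Finset (Finset (Fin (2 * n))) :=
  P.image (Finset.image (evenEmb n)) ∪ Q.image (Finset.image (oddEmb n))

/-- `Q` is the Kreweras complement of `P`: it is the coarsest partition of the primed
copy of `[n]` such that `P ∪ Q` is non-crossing in the interleaved order. -/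
def IsKreweras (n : ℕ) (P Q : Finset (Finset (Fin n))) : Prop :=
  IsNCPartition n Q ∧ NonCrossing (2 * n) (interleave n P Q) ∧
    ∀ Q' : Finset (Finset (Fin n)), IsNCPartition n Q' →
      NonCrossing (2 * n) (interleave n P Q') → refines n Q' Q


namespace KrewerasAux

variable {n : ℕ}

/-- `B` respects `S`: it is inside or disjoint from it. -/
def resp (B S : Finset (Fin n)) : Prop := B ⊆ S ∨ ∀ x ∈ B, x ∉ S

theorem resp_union {B S T : Finset (Fin n)} (hS : resp B S) (hT : resp B T) :
    resp B (S ∪ T) := by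
  rcases hS with h | h
  · exact Or.inl (h.trans Finset.subset_union_left)
  · rcases hT with h' | h'
    · exact Or.inl (h'.trans Finset.subset_union_right)
    · exact Or.inr fun x hx => by
        simp only [Finset.mem_union]
        push_neg
        exact ⟨h x hx, h' x hx⟩

theorem resp_sdiff {B S T : Finset (Fin n)} (hS : resp B S) (hT : resp B T) :
    resp B (S \ T) := by
  rcases hT with h | h
  · exact Or.inr fun x hx => by simp [Finset.mem_sdiff, h hx]
  · rcases hS with h' | h'
    · exact Or.inl fun x hx => Finset.mem_sdiff.mpr ⟨h' hx, h x hx⟩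
    · exact Or.inr fun x hx => by simp [Finset.mem_sdiff]; intro hxS; exact absurd hxS (h' x hx)

theorem resp_inter {B S T : Finset (Fin n)} (hS : resp B S) (hT : resp B T) :
    resp B (S ∩ T) := by
  rcases hS with h | h
  · rcases hT with h' | h'
    · exact Or.inl fun x hx => Finset.mem_inter.mpr ⟨h hx, h' hx⟩
    · exact Or.inr fun x hx hm => h' x hx (Finset.mem_inter.mp hm).2
  · exact Or.inr fun x hx hm => h x hx (Finset.mem_inter.mp hm).1

open Classical in
/-- The (cyclic) interval strictly between the gaps after `i` and after `j`. -/
noncomputable def iv (i j : Fin n) : Finset (Fin n) :=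
  Finset.univ.filter (fun t => (i < t ∧ t ≤ j) ∨ (j < t ∧ t ≤ i))

theorem mem_iv {i j t : Fin n} :
    t ∈ iv i j ↔ ((i < t ∧ t ≤ j) ∨ (j < t ∧ t ≤ i)) := by
  simp [iv]

theorem iv_comm (i j : Fin n) : iv i j = iv j i := by
  ext t; simp [mem_iv]; tauto

/-- `rel P i j`: the chord between the gap after `i` and the gap after `j` crosses
no block of `P`. -/
def rel (P : Finset (Finset (Fin n))) (i j : Fin n) : Prop :=
  ∀ B ∈ P, resp B (iv i j)

theorem rel_refl (P : Finset (Finset (Fin n))) (i : Fin n) : rel P i i := by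
  intro B _
  exact Or.inr fun x _ hx => by
    rcases mem_iv.mp hx with ⟨h1, h2⟩ | ⟨h1, h2⟩ <;> exact absurd (h1.trans_le h2) (lt_irrefl i)

theorem rel_symm {P : Finset (Finset (Fin n))} {i j : Fin n} (h : rel P i j) : rel P j i := by
  intro B hB; rw [iv_comm]; exact h B hB

theorem iv_trans_eq (i j k : Fin n) :
    iv i k = (iv i j \ iv j k) ∪ (iv j k \ iv i j) := by
  ext t
  simp only [Finset.mem_union, Finset.mem_sdiff, mem_iv, Fin.lt_def, Fin.le_def]
  omega

theorem rel_trans {P : Finset (Finset (Fin n))} {i j k : Fin n}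
    (h1 : rel P i j) (h2 : rel P j k) : rel P i k := by
  intro B hB
  rw [iv_trans_eq i j k]
  exact resp_union (resp_sdiff (h1 B hB) (h2 B hB)) (resp_sdiff (h2 B hB) (h1 B hB))
open Classical in
noncomputable def cls (P : Finset (Finset (Fin n))) (i : Fin n) : Finset (Fin n) :=
  Finset.univ.filter (rel P i)

theorem mem_cls {P : Finset (Finset (Fin n))} {i j : Fin n} :
    j ∈ cls P i ↔ rel P i j := by simp [cls]

theorem self_mem_cls {P : Finset (Finset (Fin n))} {i : Fin n} : i ∈ cls P i :=
  mem_cls.mpr (rel_refl P i)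

theorem cls_eq_of_rel {P : Finset (Finset (Fin n))} {i j : Fin n} (h : rel P i j) :
    cls P i = cls P j := by
  ext t
  simp only [mem_cls]
  exact ⟨fun ht => rel_trans (rel_symm h) ht, fun ht => rel_trans h ht⟩

noncomputable def kComp (P : Finset (Finset (Fin n))) : Finset (Finset (Fin n)) :=
  Finset.univ.image (cls P)

theorem mem_kComp {P : Finset (Finset (Fin n))} {C : Finset (Fin n)} :
    C ∈ kComp P ↔ ∃ i, C = cls P i := by
  simp [kComp, eq_comm]

theorem cls_mem_kComp {P : Finset (Finset (Fin n))} (i : Fin n) : cls P i ∈ kComp P :=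
  mem_kComp.mpr ⟨i, rfl⟩

/-- A block of `kComp P` containing `i` is `cls P i`. -/
theorem eq_cls_of_mem {P : Finset (Finset (Fin n))} {C : Finset (Fin n)} {i : Fin n}
    (hC : C ∈ kComp P) (hi : i ∈ C) : C = cls P i := by
  obtain ⟨c, rfl⟩ := mem_kComp.mp hC
  exact cls_eq_of_rel (mem_cls.mp hi)

theorem kComp_disjoint {P : Finset (Finset (Fin n))} :
    ∀ C ∈ kComp P, ∀ C' ∈ kComp P, C ≠ C' → Disjoint C C' := by
  intro C hC C' hC' hne
  rw [Finset.disjoint_left]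
  intro x hx hx'
  exact hne ((eq_cls_of_mem hC hx).trans (eq_cls_of_mem hC' hx').symm)

theorem iv_inter_eq {i j k l : Fin n} (h1 : i < k) (h2 : k < j) (h3 : j < l) :
    iv k j = iv i j ∩ iv k l := by
  have h1' := h1; have h2' := h2; have h3' := h3
  rw [Fin.lt_def] at h1' h2' h3'
  ext t
  simp only [Finset.mem_inter, mem_iv, Fin.lt_def, Fin.le_def]
  omega

theorem kComp_nonCrossing {P : Finset (Finset (Fin n))} :
    ∀ C ∈ kComp P, ∀ C' ∈ kComp P, C ≠ C' →
      ∀ i ∈ C, ∀ j ∈ C, ∀ k ∈ C', ∀ l ∈ C', ¬(i < k ∧ k < j ∧ j < l) := by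
  intro C hC C' hC' hne i hi j hj k hk l hl ⟨h1, h2, h3⟩
  -- rel k j holds, hence cls i = cls k, contradiction with disjointness
  have hij : rel P i j := by
    have := eq_cls_of_mem hC hi ▸ hj
    exact mem_cls.mp this
  have hkl : rel P k l := by
    have := eq_cls_of_mem hC' hk ▸ hl
    exact mem_cls.mp this
  have hkj : rel P k j := by
    intro B hB
    rw [iv_inter_eq h1 h2 h3]
    exact resp_inter (hij B hB) (hkl B hB)
  have : C = C' := by
    rw [eq_cls_of_mem hC hj, eq_cls_of_mem hC' hk]
    exact (cls_eq_of_rel hkj).symm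
  exact hne this
theorem even_ne_odd {A C : Finset (Fin n)} (hA : A.Nonempty) :
    A.image (evenEmb n) ≠ C.image (oddEmb n) := by
  intro h
  obtain ⟨a, ha⟩ := hA
  have : evenEmb n a ∈ C.image (oddEmb n) := h ▸ Finset.mem_image_of_mem _ ha
  obtain ⟨c, _, hc⟩ := Finset.mem_image.mp this
  have : 2 * c.val + 1 = 2 * a.val := congrArg Fin.val hc
  omega

theorem mem_interleave {P Q : Finset (Finset (Fin n))} {B : Finset (Fin (2 * n))} :
    B ∈ interleave n P Q ↔
      (∃ A ∈ P, B = A.image (evenEmb n)) ∨ (∃ C ∈ Q, B = C.image (oddEmb n)) := by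
  simp [interleave, eq_comm]

/-- A crossing between an even block and an odd block, in either orientation,
contradicts `rel c c'` for `c, c'` the odd labels. -/
theorem no_mixed_crossing {P : Finset (Finset (Fin n))} {A : Finset (Fin n)}
    (hA : A ∈ P) {c c' a a' : Fin n} (hrel : rel P c c')
    (ha : a ∈ A) (ha' : a' ∈ A)
    (h1 : c.val < a'.val) (h2 : a'.val ≤ c'.val) (h3 : a.val ≤ c.val ∨ c'.val < a.val) :
    False := by
  have hc : c < c' := by rw [Fin.lt_def]; omega
  have hmem : a' ∈ iv c c' := mem_iv.mpr (Or.inl ⟨by rwa [Fin.lt_def], by rwa [Fin.le_def]⟩)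
  have hnmem : a ∉ iv c c' := by
    intro hm
    rcases mem_iv.mp hm with ⟨u, v⟩ | ⟨u, v⟩
    · rw [Fin.lt_def] at u; rw [Fin.le_def] at v; omega
    · rw [Fin.lt_def] at u; rw [Fin.le_def] at v; rw [Fin.lt_def] at hc; omega
  rcases hrel A hA with h | h
  · exact hnmem (h ha)
  · exact h a' ha' hmem

theorem interleave_nonCrossing {P : Finset (Finset (Fin n))} (hP : IsNCPartition n P) :
    NonCrossing (2 * n) (interleave n P (kComp P)) := by
  intro B1 hB1 B2 hB2 hne i hi j hj k hk l hl ⟨h1, h2, h3⟩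
  rw [Fin.lt_def] at h1 h2 h3
  rcases mem_interleave.mp hB1 with ⟨A1, hA1, rfl⟩ | ⟨C1, hC1, rfl⟩ <;>
    rcases mem_interleave.mp hB2 with ⟨A2, hA2, rfl⟩ | ⟨C2, hC2, rfl⟩
  · -- even / even
    obtain ⟨a, ha, rfl⟩ := Finset.mem_image.mp hi
    obtain ⟨b, hb, rfl⟩ := Finset.mem_image.mp hj
    obtain ⟨c, hc, rfl⟩ := Finset.mem_image.mp hk
    obtain ⟨d, hd, rfl⟩ := Finset.mem_image.mp hl
    simp only [evenEmb] at h1 h2 h3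
    have hAne : A1 ≠ A2 := fun h => hne (by rw [h])
    exact hP.2.2.2 A1 hA1 A2 hA2 hAne a ha b hb c hc d hd
      ⟨by rw [Fin.lt_def]; simpa using by omega,
       by rw [Fin.lt_def]; simpa using by omega,
       by rw [Fin.lt_def]; simpa using by omega⟩
  · -- even / odd
    obtain ⟨a, ha, rfl⟩ := Finset.mem_image.mp hi
    obtain ⟨b, hb, rfl⟩ := Finset.mem_image.mp hj
    obtain ⟨c, hc, rfl⟩ := Finset.mem_image.mp hk
    obtain ⟨d, hd, rfl⟩ := Finset.mem_image.mp hl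
    simp only [evenEmb, oddEmb] at h1 h2 h3
    have hrel : rel P c d := mem_cls.mp ((eq_cls_of_mem hC2 hc) ▸ hd)
    exact no_mixed_crossing hA1 hrel ha hb (by omega) (by omega) (by omega)
  · -- odd / even
    obtain ⟨c, hc, rfl⟩ := Finset.mem_image.mp hi
    obtain ⟨c', hc', rfl⟩ := Finset.mem_image.mp hj
    obtain ⟨a, ha, rfl⟩ := Finset.mem_image.mp hk
    obtain ⟨a', ha', rfl⟩ := Finset.mem_image.mp hl
    simp only [evenEmb, oddEmb] at h1 h2 h3
    have hrel : rel P c c' := mem_cls.mp ((eq_cls_of_mem hC1 hc) ▸ hc')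
    exact no_mixed_crossing hA2 hrel ha' ha (by omega) (by omega) (Or.inr (by omega))
  · -- odd / odd
    obtain ⟨c, hc, rfl⟩ := Finset.mem_image.mp hi
    obtain ⟨c', hc', rfl⟩ := Finset.mem_image.mp hj
    obtain ⟨d, hd, rfl⟩ := Finset.mem_image.mp hk
    obtain ⟨d', hd', rfl⟩ := Finset.mem_image.mp hl
    simp only [oddEmb] at h1 h2 h3
    have hCne : C1 ≠ C2 := fun h => hne (by rw [h])
    exact kComp_nonCrossing C1 hC1 C2 hC2 hCne c hc c' hc' d hd d' hd'
      ⟨by rw [Fin.lt_def]; simpa using by omega,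
       by rw [Fin.lt_def]; simpa using by omega,
       by rw [Fin.lt_def]; simpa using by omega⟩
theorem even_mem_interleave {P Q : Finset (Finset (Fin n))} {A : Finset (Fin n)} (hA : A ∈ P) :
    A.image (evenEmb n) ∈ interleave n P Q :=
  Finset.mem_union_left _ (Finset.mem_image_of_mem _ hA)

theorem odd_mem_interleave {P Q : Finset (Finset (Fin n))} {C : Finset (Fin n)} (hC : C ∈ Q) :
    C.image (oddEmb n) ∈ interleave n P Q :=
  Finset.mem_union_right _ (Finset.mem_image_of_mem _ hC)

/-- Key step for maximality: elements of a compatible block are `rel`-related. -/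
theorem rel_of_compatible {P Q' : Finset (Finset (Fin n))}
    (hI : NonCrossing (2 * n) (interleave n P Q'))
    {C' : Finset (Fin n)} (hC' : C' ∈ Q') {i j : Fin n} (hi : i ∈ C') (hj : j ∈ C') :
    rel P i j := by
  have key : ∀ i j : Fin n, i ∈ C' → j ∈ C' → i < j → rel P i j := by
    clear hi hj i j
    intro i j hi hj hlt
    intro B hB
    by_contra hresp
    rw [resp] at hresp
    push_neg at hresp
    obtain ⟨⟨u, hu, huiv⟩, v, hv, hviv⟩ :
        (∃ u ∈ B, u ∉ iv i j) ∧ ∃ v ∈ B, v ∈ iv i j := by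
      obtain ⟨h1, v, hv, hviv⟩ := hresp
      exact ⟨Finset.not_subset.mp h1, v, hv, hviv⟩
    have hvin : i.val < v.val ∧ v.val ≤ j.val := by
      rcases mem_iv.mp hviv with ⟨h1, h2⟩ | ⟨h1, h2⟩
      · exact ⟨Fin.lt_def.mp h1, Fin.le_def.mp h2⟩
      · rw [Fin.lt_def] at h1 hlt; rw [Fin.le_def] at h2; omega
    have huout : u.val ≤ i.val ∨ j.val < u.val := by
      by_contra hc
      push_neg at hc
      exact huiv (mem_iv.mpr (Or.inl ⟨Fin.lt_def.mpr hc.1, Fin.le_def.mpr hc.2⟩))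
    have hBne : B.Nonempty := ⟨v, hv⟩
    have hEmem := even_mem_interleave (Q := Q') hB
    have hOmem := odd_mem_interleave (P := P) hC'
    rcases huout with hle | hgt
    · -- u ≤ i : pattern 2u < 2i+1 < 2v < 2j+1, even block holds (1,3) = (2u, 2v)
      exact hI _ hEmem _ hOmem (even_ne_odd hBne)
        _ (Finset.mem_image_of_mem _ hu) _ (Finset.mem_image_of_mem _ hv)
        _ (Finset.mem_image_of_mem _ hi) _ (Finset.mem_image_of_mem _ hj)
        ⟨by simp [evenEmb, oddEmb, Fin.lt_def]; omega,
         by simp [evenEmb, oddEmb, Fin.lt_def]; omega,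
         by simp [evenEmb, oddEmb, Fin.lt_def]; omega⟩
    · -- u > j : pattern 2i+1 < 2v < 2j+1 < 2u, odd block holds (1,3) = (2i+1, 2j+1)
      exact hI _ hOmem _ hEmem (Ne.symm (even_ne_odd hBne))
        _ (Finset.mem_image_of_mem _ hi) _ (Finset.mem_image_of_mem _ hj)
        _ (Finset.mem_image_of_mem _ hv) _ (Finset.mem_image_of_mem _ hu)
        ⟨by simp [evenEmb, oddEmb, Fin.lt_def]; omega,
         by simp [evenEmb, oddEmb, Fin.lt_def]; omega,
         by simp [evenEmb, oddEmb, Fin.lt_def]; omega⟩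
  rcases lt_trichotomy i j with hlt | rfl | hlt
  · exact key i j hi hj hlt
  · exact rel_refl P i
  · exact rel_symm (key j i hj hi hlt)

theorem kComp_maximal {P Q' : Finset (Finset (Fin n))}
    (hQ' : IsNCPartition n Q') (hI : NonCrossing (2 * n) (interleave n P Q')) :
    refines n Q' (kComp P) := by
  intro C' hC'
  obtain ⟨i0, hi0⟩ := hQ'.1 C' hC'
  refine ⟨cls P i0, cls_mem_kComp i0, fun j hj => ?_⟩
  exact mem_cls.mpr (rel_of_compatible hI hC' hi0 hj)

theorem rel_anti {P P' : Finset (Finset (Fin n))} (h : refines n P P')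
    {i j : Fin n} (hrel : rel P' i j) : rel P i j := by
  intro B hB
  obtain ⟨B', hB', hsub⟩ := h B hB
  rcases hrel B' hB' with hs | hs
  · exact Or.inl (hsub.trans hs)
  · exact Or.inr fun x hx => hs x (hsub hx)

theorem kComp_anti {P P' : Finset (Finset (Fin n))} (h : refines n P P') :
    refines n (kComp P') (kComp P) := by
  intro C hC
  obtain ⟨i, rfl⟩ : ∃ i, C = cls P' i := by
    simpa [kComp, eq_comm] using hC
  exact ⟨cls P i, cls_mem_kComp i, fun j hj => mem_cls.mpr (rel_anti h (mem_cls.mp hj))⟩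
/-- Blocks of a partition containing a common element are equal. -/
theorem block_eq {P : Finset (Finset (Fin n))} (hP : IsNCPartition n P)
    {B B' : Finset (Fin n)} (hB : B ∈ P) (hB' : B' ∈ P) {x : Fin n}
    (hx : x ∈ B) (hx' : x ∈ B') : B = B' := by
  by_contra hne
  exact Finset.disjoint_left.mp (hP.2.1 B hB B' hB' hne) hx hx'

/-- Step lemma: for `b ≥ 1` with block `B₀`, the gap before `b` is related to the gap
after the cyclic predecessor of `b` in `B₀`. -/
theorem step (hP : IsNCPartition n P) {b : Fin n} (hb1 : 0 < b.val)
    {B₀ : Finset (Fin n)} (hB₀ : B₀ ∈ P) (hbB : b ∈ B₀) :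
    ∃ j ∈ B₀, rel P ⟨b.val - 1, by have := b.isLt; omega⟩ j := by
  classical
  set b' : Fin n := ⟨b.val - 1, by have := b.isLt; omega⟩ with hb'
  have hb'v : b'.val = b.val - 1 := rfl
  set s : Finset (Fin n) := B₀.filter (· < b) with hs
  by_cases hsne : s.Nonempty
  · -- predecessor below b
    set j := s.max' hsne with hj
    have hjs : j ∈ s := s.max'_mem hsne
    have hjB : j ∈ B₀ := (Finset.mem_filter.mp hjs).1
    have hjb : j < b := by
      have := (Finset.mem_filter.mp hjs).2
      simpa using this
    have hjmax : ∀ x ∈ B₀, x < b → x ≤ j := fun x hx hxb =>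
      s.le_max' x (Finset.mem_filter.mpr ⟨hx, by simpa using hxb⟩)
    refine ⟨j, hjB, ?_⟩
    rcases eq_or_lt_of_le (show j ≤ b' from Fin.le_def.mpr (by
        have := Fin.lt_def.mp hjb; simp [hb']; omega)) with heq | hlt
    · rw [← heq]; exact rel_refl P j
    -- j < b' : interval iv b' j = iv j b' = (j, b')
    intro B hB
    by_cases hBB : B = B₀
    · subst hBB
      refine Or.inr fun x hx hm => ?_
      have hxm : j.val < x.val ∧ x.val ≤ b.val - 1 := by
        rcases mem_iv.mp hm with ⟨h1, h2⟩ | ⟨h1, h2⟩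
        · rw [Fin.lt_def] at h1 hlt; rw [Fin.le_def] at h2; simp [hb'] at *; omega
        · exact ⟨Fin.lt_def.mp h1, by have := Fin.le_def.mp h2; simp [hb'] at this; omega⟩
      have hxb : x < b := Fin.lt_def.mpr (by omega)
      have := Fin.le_def.mp (hjmax x hx hxb)
      omega
    · by_contra hresp
      rw [resp] at hresp
      push_neg at hresp
      obtain ⟨hns, y, hy, hyiv⟩ := hresp
      obtain ⟨z, hz, hziv⟩ := Finset.not_subset.mp hns
      have hym : j.val < y.val ∧ y.val ≤ b.val - 1 := by
        rcases mem_iv.mp hyiv with ⟨h1, h2⟩ | ⟨h1, h2⟩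
        · rw [Fin.lt_def] at h1 hlt; rw [Fin.le_def] at h2; simp [hb'] at *; omega
        · exact ⟨Fin.lt_def.mp h1, by have := Fin.le_def.mp h2; simp [hb'] at this; omega⟩
      have hzm : z.val ≤ j.val ∨ b.val - 1 < z.val := by
        by_contra hc
        push_neg at hc
        refine hziv (mem_iv.mpr (Or.inr ⟨Fin.lt_def.mpr (by omega),
          Fin.le_def.mpr (by rw [hb'v]; omega)⟩))
      have hzj : z ≠ j := fun h => hBB (block_eq hP hB hB₀ (h ▸ hz) hjB)
      have hzb : z ≠ b := fun h => hBB (block_eq hP hB hB₀ (h ▸ hz) hbB)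
      rw [Fin.ne_iff_vne] at hzj hzb
      rcases hzm with hle | hgt
      · -- z < j < y < b : crossing (z,y ∈ B ; j,b ∈ B₀)
        exact hP.2.2.2 B hB B₀ hB₀ hBB z hz y hy j hjB b hbB
          ⟨Fin.lt_def.mpr (by omega), Fin.lt_def.mpr (by omega), Fin.lt_def.mpr (by omega)⟩
      · -- j < y < b < z : crossing (j,b ∈ B₀ ; y,z ∈ B)
        exact hP.2.2.2 B₀ hB₀ B hB (fun h => hBB h.symm) j hjB b hbB y hy z hz
          ⟨Fin.lt_def.mpr (by omega), Fin.lt_def.mpr (by omega), Fin.lt_def.mpr (by omega)⟩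
  · -- b = min B₀; predecessor is max B₀ ≥ b
    have hmin : ∀ x ∈ B₀, b ≤ x := by
      intro x hx
      by_contra hc
      exact hsne ⟨x, Finset.mem_filter.mpr ⟨hx, by simpa using not_le.mp hc⟩⟩
    set j := B₀.max' ⟨b, hbB⟩ with hj
    have hjB : j ∈ B₀ := B₀.max'_mem _
    have hbj : b ≤ j := B₀.le_max' b hbB
    refine ⟨j, hjB, ?_⟩
    intro B hB
    by_cases hBB : B = B₀
    · subst hBB
      -- B₀ ⊆ iv b' j = [b, j]
      refine Or.inl fun x hx => mem_iv.mpr (Or.inl ⟨Fin.lt_def.mpr ?_, B.le_max' x hx⟩)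
      have := Fin.le_def.mp (hmin x hx)
      simp [hb']; omega
    · by_contra hresp
      rw [resp] at hresp
      push_neg at hresp
      obtain ⟨hns, y, hy, hyiv⟩ := hresp
      obtain ⟨z, hz, hziv⟩ := Finset.not_subset.mp hns
      have hbj' := Fin.le_def.mp hbj
      have hym : b.val ≤ y.val ∧ y.val ≤ j.val := by
        rcases mem_iv.mp hyiv with ⟨h1, h2⟩ | ⟨h1, h2⟩
        · have := Fin.lt_def.mp h1; have := Fin.le_def.mp h2; simp [hb'] at *; omega
        · have := Fin.lt_def.mp h1; have := Fin.le_def.mp h2; simp [hb'] at *; omega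
      have hzm : z.val < b.val ∨ j.val < z.val := by
        by_contra hc
        push_neg at hc
        refine hziv (mem_iv.mpr (Or.inl ⟨Fin.lt_def.mpr (by rw [hb'v]; omega),
          Fin.le_def.mpr (by omega)⟩))
      have hyb : y ≠ b := fun h => hBB (block_eq hP hB hB₀ (h ▸ hy) hbB)
      have hyj : y ≠ j := fun h => hBB (block_eq hP hB hB₀ (h ▸ hy) hjB)
      rw [Fin.ne_iff_vne] at hyb hyj
      rcases hzm with hlt' | hgt
      · -- z < b < y < j? no: z < b ≤ y: pattern z < b < y ... need y < j? we have b < y < j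
        -- crossing: z,y ∈ B ; b,j ∈ B₀ : z < b < y < j
        exact hP.2.2.2 B hB B₀ hB₀ hBB z hz y hy b hbB j hjB
          ⟨Fin.lt_def.mpr (by omega), Fin.lt_def.mpr (by omega), Fin.lt_def.mpr (by omega)⟩
      · -- b < y < j < z : crossing b,j ∈ B₀ ; y,z ∈ B
        exact hP.2.2.2 B₀ hB₀ B hB (fun h => hBB h.symm) b hbB j hjB y hy z hz
          ⟨Fin.lt_def.mpr (by omega), Fin.lt_def.mpr (by omega), Fin.lt_def.mpr (by omega)⟩
/-- Separation: if `a < b` lie in different blocks of `P`, some chord of the complement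
crosses the boundary of `[a, b)`. -/
theorem sep {P : Finset (Finset (Fin n))} (hP : IsNCPartition n P) :
    ∀ m : ℕ, ∀ a b : Fin n, b.val - a.val ≤ m → a < b →
      (∀ B ∈ P, a ∈ B → b ∉ B) →
      ∃ i j : Fin n, a.val ≤ i.val ∧ i.val < b.val ∧ ¬(a.val ≤ j.val ∧ j.val < b.val) ∧
        rel P i j := by
  intro m
  induction m with
  | zero => intro a b hm hab _; rw [Fin.lt_def] at hab; omega
  | succ m ih =>
    intro a b hm hab hdiff
    have hab' := Fin.lt_def.mp hab
    obtain ⟨B₀, hB₀, hbB⟩ := hP.2.2.1 b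
    obtain ⟨j, hjB, hrel⟩ := step hP (by omega) hB₀ hbB
    set i : Fin n := ⟨b.val - 1, by have := b.isLt; omega⟩ with hi
    have hiv : i.val = b.val - 1 := rfl
    by_cases hjI : a.val ≤ j.val ∧ j.val < b.val
    · -- j lands inside [a, b)
      have hja : j ≠ a := by
        intro h
        exact hdiff B₀ hB₀ (h ▸ hjB) hbB
      have hja' : a.val < j.val := by
        rcases lt_or_eq_of_le hjI.1 with h | h
        · exact h
        · exact absurd (Fin.ext h.symm) hja
      have haj : a < j := Fin.lt_def.mpr hja'
      have hdiff' : ∀ B ∈ P, a ∈ B → j ∉ B := by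
        intro B hB haB hjB'
        have : B = B₀ := block_eq hP hB hB₀ hjB' hjB
        exact hdiff B₀ hB₀ (this ▸ haB) hbB
      obtain ⟨i', j', h1, h2, h3, hrel'⟩ := ih a j (by omega) haj hdiff'
      by_cases hj'I : a.val ≤ j'.val ∧ j'.val < b.val
      · -- then j ≤ j' < b, contradiction via block B₀
        exfalso
        have hj'ge : j.val ≤ j'.val := by
          rcases Nat.lt_or_ge j'.val j.val with h | h
          · exact absurd ⟨hj'I.1, h⟩ h3
          · exact h
        -- j ∈ iv i' j', b ∉ iv i' j'
        have hjmem : j ∈ iv i' j' :=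
          mem_iv.mpr (Or.inl ⟨Fin.lt_def.mpr (by omega), Fin.le_def.mpr (by omega)⟩)
        have hbnmem : b ∉ iv i' j' := by
          intro hm'
          rcases mem_iv.mp hm' with ⟨u, v⟩ | ⟨u, v⟩
          · rw [Fin.lt_def] at u; rw [Fin.le_def] at v; omega
          · rw [Fin.lt_def] at u; rw [Fin.le_def] at v; omega
        rcases hrel' B₀ hB₀ with h | h
        · exact hbnmem (h hbB)
        · exact h j hjB hjmem
      · exact ⟨i', j', h1, by omega, hj'I, hrel'⟩
    · -- j is outside, done with i = b - 1
      exact ⟨i, j, by omega, by omega, hjI, hrel⟩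
def same (P : Finset (Finset (Fin n))) (a b : Fin n) : Prop := ∃ B ∈ P, a ∈ B ∧ b ∈ B

/-- If `a, b` are in the same block, no complement chord separates `[a, b)`. -/
theorem no_sep_of_same {P : Finset (Finset (Fin n))} {a b : Fin n}
    (hab : a.val < b.val) (hsame : same P a b) {x y : Fin n}
    (hx : a.val ≤ x.val ∧ x.val < b.val) (hy : ¬(a.val ≤ y.val ∧ y.val < b.val))
    (hrel : rel P x y) : False := by
  obtain ⟨B₀, hB₀, haB, hbB⟩ := hsame
  push_neg at hy
  rcases Nat.lt_or_ge y.val a.val with hya | hyb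
  · -- y < a ≤ x : a ∈ iv x y, b ∉ iv x y
    have hamem : a ∈ iv x y :=
      mem_iv.mpr (Or.inr ⟨Fin.lt_def.mpr (by omega), Fin.le_def.mpr (by omega)⟩)
    have hbnmem : b ∉ iv x y := by
      intro hm
      rcases mem_iv.mp hm with ⟨u, v⟩ | ⟨u, v⟩ <;>
        (rw [Fin.lt_def] at u; rw [Fin.le_def] at v; omega)
    rcases hrel B₀ hB₀ with h | h
    · exact hbnmem (h hbB)
    · exact h a haB hamem
  · -- x < b ≤ y : b ∈ iv x y, a ∉ iv x y
    have hyb' : b.val ≤ y.val := hy hyb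
    have hbmem : b ∈ iv x y :=
      mem_iv.mpr (Or.inl ⟨Fin.lt_def.mpr (by omega), Fin.le_def.mpr (by omega)⟩)
    have hanmem : a ∉ iv x y := by
      intro hm
      rcases mem_iv.mp hm with ⟨u, v⟩ | ⟨u, v⟩ <;>
        (rw [Fin.lt_def] at u; rw [Fin.le_def] at v; omega)
    rcases hrel B₀ hB₀ with h | h
    · exact hanmem (h haB)
    · exact h b hbB hbmem

theorem same_iff {P : Finset (Finset (Fin n))} (hP : IsNCPartition n P) {a b : Fin n}
    (hab : a.val < b.val) :
    same P a b ↔ ∀ i j : Fin n, rel P i j →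
      ((a.val ≤ i.val ∧ i.val < b.val) ↔ (a.val ≤ j.val ∧ j.val < b.val)) := by
  constructor
  · intro hsame i j hrel
    constructor
    · intro hi
      by_contra hj
      exact no_sep_of_same hab hsame hi hj hrel
    · intro hj
      by_contra hi
      exact no_sep_of_same hab hsame hj hi (rel_symm hrel)
  · intro h
    by_contra hns
    have hdiff : ∀ B ∈ P, a ∈ B → b ∉ B := fun B hB haB hbB => hns ⟨B, hB, haB, hbB⟩
    obtain ⟨i, j, h1, h2, h3, hrel⟩ :=
      sep hP (b.val - a.val) a b le_rfl (Fin.lt_def.mpr hab) hdiff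
    exact h3 ((h i j hrel).mp ⟨h1, h2⟩)

theorem same_symm {P : Finset (Finset (Fin n))} {a b : Fin n} (h : same P a b) : same P b a := by
  obtain ⟨B, hB, h1, h2⟩ := h
  exact ⟨B, hB, h2, h1⟩

theorem same_of_kComp_eq {P P' : Finset (Finset (Fin n))} (hP : IsNCPartition n P)
    (hP' : IsNCPartition n P') (h : kComp P = kComp P') {a b : Fin n} :
    same P a b ↔ same P' a b := by
  have hrel : ∀ i j : Fin n, rel P i j ↔ rel P' i j := by
    intro i j
    have hcls : cls P i = cls P' i := by
      have h1 : cls P' i ∈ kComp P := h ▸ cls_mem_kComp i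
      exact (eq_cls_of_mem h1 self_mem_cls).symm
    rw [← mem_cls, ← mem_cls, hcls]
  rcases lt_trichotomy a.val b.val with hab | hab | hab
  · rw [same_iff hP hab, same_iff hP' hab]
    exact ⟨fun H i j hr => H i j ((hrel i j).mpr hr), fun H i j hr => H i j ((hrel i j).mp hr)⟩
  · have : a = b := Fin.ext hab
    subst this
    constructor <;> intro _
    · obtain ⟨B, hB, hx⟩ := hP'.2.2.1 a; exact ⟨B, hB, hx, hx⟩
    · obtain ⟨B, hB, hx⟩ := hP.2.2.1 a; exact ⟨B, hB, hx, hx⟩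
  · rw [show same P a b ↔ same P b a from ⟨same_symm, same_symm⟩,
       show same P' a b ↔ same P' b a from ⟨same_symm, same_symm⟩,
       same_iff hP hab, same_iff hP' hab]
    exact ⟨fun H i j hr => H i j ((hrel i j).mpr hr), fun H i j hr => H i j ((hrel i j).mp hr)⟩

theorem kComp_injective {P P' : Finset (Finset (Fin n))} (hP : IsNCPartition n P)
    (hP' : IsNCPartition n P') (h : kComp P = kComp P') : P = P' := by
  have hsame := fun a b => same_of_kComp_eq hP hP' h (a := a) (b := b)
  have key : ∀ (Q Q' : Finset (Finset (Fin n))), IsNCPartition n Q → IsNCPartition n Q' →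
      (∀ a b, same Q a b ↔ same Q' a b) → ∀ B ∈ Q, B ∈ Q' := by
    intro Q Q' hQ hQ' hs B hB
    obtain ⟨x, hx⟩ := hQ.1 B hB
    obtain ⟨B', hB', hxB'⟩ := hQ'.2.2.1 x
    have : B = B' := by
      apply Finset.ext
      intro y
      constructor
      · intro hy
        obtain ⟨B'', hB'', hxB'', hyB''⟩ := (hs x y).mp ⟨B, hB, hx, hy⟩
        exact (block_eq hQ' hB'' hB' hxB'' hxB') ▸ hyB''
      · intro hy
        obtain ⟨B'', hB'', hxB'', hyB''⟩ := (hs x y).mpr ⟨B', hB', hxB', hy⟩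
        exact (block_eq hQ hB'' hB hxB'' hx) ▸ hyB''
    exact this ▸ hB'
  apply Finset.ext
  intro B
  exact ⟨fun hB => key P P' hP hP' hsame B hB,
         fun hB => key P' P hP' hP (fun a b => (hsame a b).symm) B hB⟩

theorem kComp_isNCPartition (P : Finset (Finset (Fin n))) :
    IsNCPartition n (kComp P) :=
  ⟨fun _ hC => (mem_kComp.mp hC).elim fun i hi => ⟨i, hi ▸ self_mem_cls⟩,
   kComp_disjoint,
   fun i => ⟨cls P i, cls_mem_kComp i, self_mem_cls⟩,
   kComp_nonCrossing⟩

end KrewerasAux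

/-- The Kreweras complement is an order-reversing bijection on the set of
non-crossing partitions of `[n]`: there is a bijection `f` of the set of
non-crossing partitions with itself such that `f P` is the Kreweras complement
of `P` for every `P`, and `P ≤ Q` implies `f Q ≤ f P` in the refinement order. -/
theorem kreweras_order_reversing_bijection (n : ℕ) :
    ∃ f : {P : Finset (Finset (Fin n)) // IsNCPartition n P} →
          {P : Finset (Finset (Fin n)) // IsNCPartition n P},
      Function.Bijective f ∧
      (∀ P, IsKreweras n P.1 (f P).1) ∧
      (∀ P Q, refines n P.1 Q.1 → refines n (f Q).1 (f P).1) := by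
  classical
  refine ⟨fun P => ⟨KrewerasAux.kComp P.1, KrewerasAux.kComp_isNCPartition P.1⟩, ?_, ?_, ?_⟩
  · rw [← Finite.injective_iff_bijective]
    rintro ⟨P, hP⟩ ⟨P', hP'⟩ hEq
    exact Subtype.ext (KrewerasAux.kComp_injective hP hP' (congrArg Subtype.val hEq))
  · rintro ⟨P, hP⟩
    exact ⟨KrewerasAux.kComp_isNCPartition P, KrewerasAux.interleave_nonCrossing hP,
      fun Q' hQ' hI => KrewerasAux.kComp_maximal hQ' hI⟩
  · rintro ⟨P, hP⟩ ⟨Q, hQ⟩ h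
    exact KrewerasAux.kComp_anti h
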